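/- arXiv:1803.10022 — 3 statements merged into one kernel-verified Lean document; each statement's English description precedes it below -/
import Mathlib

section
/- Let (X, M) be a measurable space, let N ⊆ M be a family of measurable sets, and let μ be a σ-finite measure defined on M. Then μ can be written uniquely as μ = μ_N + μ_N^⊥, where μ_N and μ_N^⊥ are measures on M such that μ_N is carried by N (there exist countably many sets N_i ∈ N with μ_N(X \ ⋃_i N_i) = 0) and μ_N^⊥ is singular to N (μ_N^⊥(N) = 0 for every N ∈ N). Moreover, there exists a set A ∈ M, which is a countable union of members of N, such that μ_N = μ restricted to A and μ_N^⊥ = μ restricted to X \ A. -/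
open MeasureTheory Set Filter

/-- Removing a relatively null part does not change the measure. -/
lemma meas_inter_eq_of_diff_null {X : Type*} [MeasurableSpace X] (ρ : Measure X)
    {s t : Set X} (h : ρ (s \ t) = 0) : ρ (s ∩ t) = ρ s := by
  refine le_antisymm (measure_mono inter_subset_left) ?_
  calc ρ s = ρ ((s ∩ t) ∪ (s \ t)) := by rw [inter_union_diff]
    _ ≤ ρ (s ∩ t) + ρ (s \ t) := measure_union_le _ _
    _ = ρ (s ∩ t) := by rw [h, add_zero]

/-- A measure `μ` is *carried by* a family `N` of sets if there exist countably many sets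
in `N` such that the complement of their union is `μ`-null. -/
def CarriedBy {X : Type*} [MeasurableSpace X] (μ : Measure X) (N : Set (Set X)) : Prop :=
  ∃ S : Set (Set X), S.Countable ∧ S ⊆ N ∧ μ (univ \ ⋃₀ S) = 0

/-- A measure `μ` is *singular to* a family `N` of sets if `μ` vanishes on every member of `N`. -/
def SingularTo {X : Type*} [MeasurableSpace X] (μ : Measure X) (N : Set (Set X)) : Prop :=
  ∀ s ∈ N, μ s = 0

/-- **Decomposition of σ-finite measures.** Every σ-finite measure decomposes uniquely as the
sum of a measure carried by `N` and a measure singular to `N`; moreover the two pieces are the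
restrictions of `μ` to a measurable set `A` (a countable union of members of `N`) and to its
complement, respectively. -/
theorem statement0 {X : Type*} [MeasurableSpace X] (N : Set (Set X))
    (hN : ∀ s ∈ N, MeasurableSet s) (μ : Measure X) [SigmaFinite μ] :
    ∃ A : Set X, MeasurableSet A ∧
      (∃ S : Set (Set X), S.Countable ∧ S ⊆ N ∧ A = ⋃₀ S) ∧
      μ = μ.restrict A + μ.restrict (univ \ A) ∧
      CarriedBy (μ.restrict A) N ∧ SingularTo (μ.restrict (univ \ A)) N ∧
      ∀ ν₁ ν₂ : Measure X, μ = ν₁ + ν₂ → CarriedBy ν₁ N → SingularTo ν₂ N →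
        ν₁ = μ.restrict A ∧ ν₂ = μ.restrict (univ \ A) := by
  classical
  obtain ⟨ν, hνfin, hμν, hνμ⟩ := exists_isFiniteMeasure_absolutelyContinuous μ
  set V : Set ENNReal := (fun S => ν (⋃₀ S)) '' {S | S.Countable ∧ S ⊆ N} with hV
  have hVne : V.Nonempty := ⟨ν (⋃₀ (∅ : Set (Set X))), ⟨∅, ⟨countable_empty, empty_subset _⟩, rfl⟩⟩
  have hVbdd : BddAbove V := ⟨ν univ, fun y hy => by
    obtain ⟨S, _, rfl⟩ := hy; exact measure_mono (subset_univ _)⟩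
  obtain ⟨u, -, hu, humem⟩ := exists_seq_tendsto_sSup hVne hVbdd
  choose T hT hTu using humem
  set S : Set (Set X) := ⋃ n, T n with hS
  have hScnt : S.Countable := countable_iUnion fun n => (hT n).1
  have hSN : S ⊆ N := iUnion_subset fun n => (hT n).2
  set A : Set X := ⋃₀ S with hA
  have hAmeas : MeasurableSet A := MeasurableSet.sUnion hScnt fun t ht => hN t (hSN ht)
  have hle : ν A ≤ sSup V := le_csSup hVbdd ⟨S, ⟨hScnt, hSN⟩, rfl⟩
  have hge : sSup V ≤ ν A := by
    refine le_of_tendsto' hu fun n => ?_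
    rw [← hTu n]
    exact measure_mono (sUnion_subset_sUnion (subset_iUnion T n))
  have hνA : ν A = sSup V := le_antisymm hle hge
  -- key maximality: for every t ∈ N, μ (t \ A) = 0
  have hμA : ∀ t ∈ N, μ (t \ A) = 0 := by
    intro t ht
    refine hμν ?_
    have h1 : ν (⋃₀ (insert t S)) ≤ sSup V :=
      le_csSup hVbdd ⟨insert t S, ⟨hScnt.insert t, insert_subset ht hSN⟩, rfl⟩
    rw [sUnion_insert] at h1
    have h2 : t ∪ A = A ∪ (t \ A) := by rw [union_diff_self]; exact union_comm _ _
    have h3 : ν A + ν (t \ A) ≤ ν A := by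
      calc ν A + ν (t \ A) = ν (A ∪ (t \ A)) :=
            (measure_union disjoint_sdiff_right ((hN t ht).diff hAmeas)).symm
        _ = ν (t ∪ A) := by rw [h2]
        _ ≤ sSup V := h1
        _ = ν A := hνA.symm
    have hfin : ν A ≠ ⊤ := measure_ne_top ν A
    have h4 : ν A + ν (t \ A) ≤ ν A + 0 := by simpa [add_zero] using h3
    exact le_antisymm ((ENNReal.add_le_add_iff_left hfin).mp h4) zero_le
  have hucompl : univ \ A = Aᶜ := (compl_eq_univ_diff A).symm
  refine ⟨A, hAmeas, ⟨S, hScnt, hSN, rfl⟩, ?_, ?_, ?_, ?_⟩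
  · rw [hucompl, Measure.restrict_add_restrict_compl hAmeas]
  · refine ⟨S, hScnt, hSN, ?_⟩
    rw [Measure.restrict_apply (MeasurableSet.univ.diff
      (MeasurableSet.sUnion hScnt fun t ht => hN t (hSN ht)))]
    simp [← hA]
  · intro t ht
    rw [hucompl, Measure.restrict_apply (hN t ht)]
    exact hμA t ht
  · rintro ν₁ ν₂ hsum ⟨S₁, hS₁c, hS₁N, hν₁⟩ hν₂
    set B : Set X := ⋃₀ S₁ with hB
    have happ : ∀ s, μ s = ν₁ s + ν₂ s := fun s => by rw [hsum]; rfl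
    have hν₁le : ∀ s, ν₁ s ≤ μ s := fun s => (happ s) ▸ le_self_add
    have hν₂le : ∀ s, ν₂ s ≤ μ s := fun s => (happ s) ▸ le_add_self
    have hν₂B : ν₂ B = 0 := (measure_sUnion_null_iff hS₁c).mpr fun t ht => hν₂ t (hS₁N ht)
    have hν₂A : ν₂ A = 0 := (measure_sUnion_null_iff hScnt).mpr fun t ht => hν₂ t (hSN ht)
    -- μ (B \ A) = 0
    have hμBA : μ (B \ A) = 0 := by
      have hsub : B \ A ⊆ ⋃₀ ((fun t => t \ A) '' S₁) := by
        intro x hx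
        obtain ⟨hxB, hxA⟩ := hx
        obtain ⟨t, ht, hxt⟩ := hxB
        exact mem_sUnion.mpr ⟨t \ A, mem_image_of_mem _ ht, hxt, hxA⟩
      refine measure_mono_null hsub ((measure_sUnion_null_iff (hS₁c.image _)).mpr ?_)
      rintro _ ⟨t, ht, rfl⟩
      exact hμA t (hS₁N ht)
    have hν₁Bc : ∀ s : Set X, ν₁ (s \ B) = 0 := fun s =>
      measure_mono_null (diff_subset_diff_left (subset_univ s)) hν₁
    constructor
    · refine Measure.ext fun E hE => ?_
      rw [Measure.restrict_apply hE]
      have e1 : ν₁ (E ∩ B) = ν₁ E := meas_inter_eq_of_diff_null ν₁ (hν₁Bc E)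
      have e2 : ν₁ (E ∩ B ∩ A) = ν₁ (E ∩ B) := by
        refine meas_inter_eq_of_diff_null ν₁ (nonpos_iff_eq_zero.mp ((hν₁le _).trans ?_))
        exact (measure_mono_null (diff_subset_diff_left inter_subset_right) hμBA).le
      have e3 : ν₂ (E ∩ B ∩ A) = 0 := measure_mono_null inter_subset_right hν₂A
      have e4 : μ (E ∩ B ∩ A) = ν₁ (E ∩ B ∩ A) := by rw [happ, e3, add_zero]
      have e5 : μ ((E ∩ A) \ B) = 0 := by
        rw [happ]
        have h1 : ν₁ ((E ∩ A) \ B) = 0 := hν₁Bc _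
        have h2 : ν₂ ((E ∩ A) \ B) = 0 :=
          measure_mono_null (fun x hx => hx.1.2) hν₂A
        rw [h1, h2, add_zero]
      have e6 : μ (E ∩ A ∩ B) = μ (E ∩ A) := meas_inter_eq_of_diff_null μ e5
      have e7 : E ∩ B ∩ A = E ∩ A ∩ B := by ac_rfl
      rw [← e1, ← e2, ← e4, e7, e6]
    · refine Measure.ext fun E hE => ?_
      rw [hucompl, Measure.restrict_apply hE]
      have f1 : ν₂ (E ∩ Aᶜ) = ν₂ E :=
        meas_inter_eq_of_diff_null ν₂
          (measure_mono_null (fun x hx => not_not.mp hx.2) hν₂A)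
      have f2 : ν₁ (E ∩ Aᶜ) = 0 := by
        have h1 : ν₁ ((E ∩ Aᶜ) ∩ B) = ν₁ (E ∩ Aᶜ) :=
          meas_inter_eq_of_diff_null ν₁ (hν₁Bc _)
        have h2 : ν₁ ((E ∩ Aᶜ) ∩ B) = 0 :=
          le_antisymm ((hν₁le _).trans_eq
            (measure_mono_null (show (E ∩ Aᶜ) ∩ B ⊆ B \ A from fun x hx => ⟨hx.2, hx.1.2⟩) hμBA)) zero_le
        rw [← h1, h2]
      rw [← f1, happ (E ∩ Aᶜ), f2, zero_add]
end

section
/- Let 1 ≤ m ≤ n−1 be integers and let μ be a Radon measure on ℝ^n. Then μ restricted to the set {x ∈ ℝ^n : liminf_{r↓0} μ(B(x,r))/r^m = 0} is purely m-unrectifiable. Consequently, if μ is m-rectifiable, then liminf_{r↓0} μ(B(x,r))/r^m > 0 for μ-a.e. x ∈ ℝ^n. -/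
open MeasureTheory Metric Set Filter
open scoped ENNReal NNReal Topology

noncomputable section

/-- A Radon measure is `m`-rectifiable if it is carried by countably many images of Lipschitz
maps `f : [0,1]^m → ℝⁿ`. -/
def MRectifiable {n : ℕ} (m : ℕ) (μ : Measure (EuclideanSpace ℝ (Fin n))) : Prop :=
  ∃ (K : ℕ → ℝ≥0) (f : ℕ → (Fin m → ℝ) → EuclideanSpace ℝ (Fin n)),
    (∀ i, LipschitzOnWith (K i) (f i) (Icc 0 1)) ∧
    μ (univ \ ⋃ i, f i '' Icc 0 1) = 0

/-- A measure is purely `m`-unrectifiable if it vanishes on the image of every Lipschitz map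
`f : [0,1]^m → ℝⁿ`. -/
def PurelyMUnrectifiable {n : ℕ} (m : ℕ) (μ : Measure (EuclideanSpace ℝ (Fin n))) : Prop :=
  ∀ (K : ℝ≥0) (f : (Fin m → ℝ) → EuclideanSpace ℝ (Fin n)),
    LipschitzOnWith K f (Icc 0 1) → μ (f '' Icc 0 1) = 0

/-- The square of the homogeneous `m`-dimensional `L²` Jones beta number,
`β₂^{m,h}(μ,x,r)² = inf_L ∫_{B(x,r)} (dist(y,L)/r)² dμ(y)/rᵐ`, the infimum over all
`m`-dimensional affine subspaces `L` of `ℝⁿ`. -/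
def betaMhSq {n : ℕ} (μ : Measure (EuclideanSpace ℝ (Fin n))) (m : ℕ)
    (x : EuclideanSpace ℝ (Fin n)) (r : ℝ) : ℝ≥0∞ :=
  ⨅ L : {L : AffineSubspace ℝ (EuclideanSpace ℝ (Fin n)) // Module.finrank ℝ L.direction = m},
    (∫⁻ y in closedBall x r, ENNReal.ofReal
        ((infDist y (L.1 : Set (EuclideanSpace ℝ (Fin n))) / r) ^ 2) ∂μ) /
      ENNReal.ofReal (r ^ m)

/-- The `L²` Jones function `∫₀¹ β₂^{m,h}(μ,x,r)² dr/r`. -/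
def jonesFnM {n : ℕ} (μ : Measure (EuclideanSpace ℝ (Fin n))) (m : ℕ)
    (x : EuclideanSpace ℝ (Fin n)) : ℝ≥0∞ :=
  ∫⁻ r in Ioc (0 : ℝ) 1, betaMhSq μ m x r / ENNReal.ofReal r

private lemma key {n m : ℕ} (μ : Measure (EuclideanSpace ℝ (Fin n))) [IsLocallyFiniteMeasure μ]
    (K : ℝ≥0) (f : (Fin m → ℝ) → EuclideanSpace ℝ (Fin n))
    (hf : LipschitzOnWith K f (Icc 0 1)) :
    μ ((f '' Icc 0 1) ∩
      {x | liminf (fun r : ℝ => μ (closedBall x r) / ENNReal.ofReal (r ^ m)) (𝓝[>] 0) = 0}) = 0 := by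
  classical
  set A : Set (EuclideanSpace ℝ (Fin n)) :=
    {x | liminf (fun r : ℝ => μ (closedBall x r) / ENNReal.ofReal (r ^ m)) (𝓝[>] 0) = 0} with hA
  set Γ : Set (EuclideanSpace ℝ (Fin n)) := f '' Icc 0 1 with hΓ
  set K' : ℝ≥0 := K + 1 with hK'
  have hK'one : (1:ℝ) ≤ (K' : ℝ) := by
    simp [hK']
  have hK'pos : (0:ℝ) < (K' : ℝ) := lt_of_lt_of_le one_pos hK'one
  have hf' : LipschitzOnWith K' f (Icc 0 1) := fun x hx y hy =>
    (hf hx hy).trans (mul_le_mul_left (by exact_mod_cast (le_self_add : K ≤ K + 1)) _)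
  have hfd : ∀ z ∈ Icc (0 : Fin m → ℝ) 1, ∀ w ∈ Icc (0 : Fin m → ℝ) 1,
      dist (f z) (f w) ≤ (K' : ℝ) * dist z w := lipschitzOnWith_iff_dist_le_mul.1 hf'
  set C : ℝ≥0∞ := ENNReal.ofReal (((K':ℝ)/2)^m) * ENNReal.ofReal ((2*(2:ℝ))^m) with hC
  have hCne : C ≠ ⊤ := ENNReal.mul_ne_top ENNReal.ofReal_ne_top ENNReal.ofReal_ne_top
  have hC0 : C ≠ 0 := by
    exact mul_ne_zero ((ENNReal.ofReal_pos.2 (by positivity)).ne')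
      ((ENNReal.ofReal_pos.2 (by positivity)).ne')
  -- main estimate
  have main : ∀ c : ℝ≥0∞, 0 < c → μ (Γ ∩ A) ≤ c * C := by
    intro c hc
    set g : EuclideanSpace ℝ (Fin n) → Set ℝ :=
      fun x => {r | 0 < r ∧ μ (closedBall x r) ≤ c * ENNReal.ofReal (r^m)} with hg
    have hgood : ∀ x ∈ Γ ∩ A, ∀ δ > 0, (g x ∩ Ioo 0 δ).Nonempty := by
      intro x hx δ hδ
      have hx2 : liminf (fun r : ℝ => μ (closedBall x r) / ENNReal.ofReal (r ^ m)) (𝓝[>] 0)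
          < c := by
        have := hx.2
        simp only [hA, mem_setOf_eq] at this
        rw [this]; exact hc
      have hfreq : ∃ᶠ r in 𝓝[>] (0:ℝ),
          μ (closedBall x r) / ENNReal.ofReal (r^m) < c :=
        frequently_lt_of_liminf_lt (by isBoundedDefault) hx2
      rw [(nhdsGT_basis (0:ℝ)).frequently_iff] at hfreq
      obtain ⟨r, hrmem, hrlt⟩ := hfreq δ hδ
      refine ⟨r, ⟨hrmem.1, ?_⟩, hrmem⟩
      have h0 : ENNReal.ofReal (r^m) ≠ 0 := by
        simp only [ne_eq, ENNReal.ofReal_eq_zero, not_le]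
        exact pow_pos hrmem.1 m
      exact le_of_lt ((ENNReal.div_lt_iff (Or.inl h0) (Or.inl ENNReal.ofReal_ne_top)).1 hrlt)
    obtain ⟨t, r, tcount, tsub, hrad, hcov, hdisj⟩ :=
      Besicovitch.exists_disjoint_closedBall_covering_ae μ g (Γ ∩ A) hgood
        (fun _ => 1) (fun _ _ => one_pos)
    have hz : ∀ x ∈ t, ∃ z, z ∈ Icc (0 : Fin m → ℝ) 1 ∧ f z = x := by
      intro x hx
      exact (tsub hx).1
    choose! z hz1 hz2 using hz
    have hr0 : ∀ x ∈ t, 0 < r x := fun x hx => ((hrad x hx).2).1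
    have hr1 : ∀ x ∈ t, r x ≤ 1 := fun x hx => le_of_lt ((hrad x hx).2).2
    have hrb : ∀ x ∈ t, μ (closedBall x (r x)) ≤ c * ENNReal.ofReal ((r x)^m) :=
      fun x hx => ((hrad x hx).1).2
    -- pullback disjointness
    have hzdisj : t.PairwiseDisjoint (fun x => closedBall (z x) (r x / (K':ℝ))) := by
      intro x hx y hy hxy
      have hd := hdisj hx hy hxy
      simp only [Function.onFun] at hd ⊢
      rw [disjoint_closedBall_closedBall_iff (hr0 x hx).le (hr0 y hy).le] at hd
      have h2 : dist x y ≤ (K':ℝ) * dist (z x) (z y) := by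
        have := hfd (z x) (hz1 x hx) (z y) (hz1 y hy)
        rwa [hz2 x hx, hz2 y hy] at this
      apply closedBall_disjoint_closedBall
      rw [← add_div, div_lt_iff₀ hK'pos]
      calc r x + r y < dist x y := hd
        _ ≤ (K':ℝ) * dist (z x) (z y) := h2
        _ = dist (z x) (z y) * (K':ℝ) := mul_comm _ _
    haveI : Countable ↥t := tcount.to_subtype
    have hsubset : (⋃ x : t, closedBall (z ↑x) (r ↑x / (K':ℝ)))
        ⊆ closedBall (fun _ : Fin m => (1/2:ℝ)) 2 := by
      rintro w hw
      simp only [mem_iUnion] at hw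
      obtain ⟨x, hwx⟩ := hw
      rw [mem_closedBall] at hwx ⊢
      have h2 : dist (z ↑x) (fun _ : Fin m => (1/2:ℝ)) ≤ 1/2 := by
        rw [dist_pi_le_iff (by norm_num)]
        intro i
        have hz' := hz1 ↑x x.2
        rw [mem_Icc] at hz'
        have h0i : (0:ℝ) ≤ z ↑x i := hz'.1 i
        have h1i : z ↑x i ≤ 1 := hz'.2 i
        rw [Real.dist_eq, abs_le]
        constructor <;> simp <;> linarith
      have hrK : r ↑x / (K':ℝ) ≤ 1 := by
        rw [div_le_one hK'pos]
        exact (hr1 _ x.2).trans hK'one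
      calc dist w (fun _ : Fin m => (1/2:ℝ))
          ≤ dist w (z ↑x) + dist (z ↑x) (fun _ : Fin m => (1/2:ℝ)) := dist_triangle _ _ _
        _ ≤ 1 + 1/2 := add_le_add (hwx.trans hrK) h2
        _ ≤ 2 := by norm_num
    have hvol : ∑' x : t, volume (closedBall (z ↑x) (r ↑x / (K':ℝ)))
        ≤ volume (closedBall (fun _ : Fin m => (1/2:ℝ)) (2:ℝ)) := by
      rw [← measure_iUnion ?_ (fun x => measurableSet_closedBall)]
      · exact measure_mono hsubset
      · intro x y hxy
        exact hzdisj x.2 y.2 (fun h => hxy (Subtype.ext h))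
    have hsum : ∑' x : t, ENNReal.ofReal ((r ↑x)^m) ≤ C := by
      have hterm : ∀ x : t, ENNReal.ofReal ((r ↑x)^m)
          = ENNReal.ofReal (((K':ℝ)/2)^m) * volume (closedBall (z ↑x) (r ↑x / (K':ℝ))) := by
        intro x
        have hrpos : 0 < r ↑x := hr0 ↑x x.2
        have hK'ne : (K':ℝ) ≠ 0 := hK'pos.ne'
        have hid : ((K':ℝ)/2)^m * (2*(r ↑x/(K':ℝ)))^m = (r ↑x)^m := by
          rw [← mul_pow]
          congr 1
          field_simp
        rw [Real.volume_pi_closedBall _ (by positivity), Fintype.card_fin,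
          ← ENNReal.ofReal_mul (by positivity), hid]
      calc ∑' x : t, ENNReal.ofReal ((r ↑x)^m)
          = ∑' x : t, ENNReal.ofReal (((K':ℝ)/2)^m)
              * volume (closedBall (z ↑x) (r ↑x / (K':ℝ))) := tsum_congr hterm
        _ = ENNReal.ofReal (((K':ℝ)/2)^m)
              * ∑' x : t, volume (closedBall (z ↑x) (r ↑x / (K':ℝ))) := ENNReal.tsum_mul_left
        _ ≤ ENNReal.ofReal (((K':ℝ)/2)^m) * volume (closedBall (fun _ : Fin m => (1/2:ℝ)) (2:ℝ)) :=
            mul_le_mul_right hvol _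
        _ = C := by
            rw [Real.volume_pi_closedBall _ (by norm_num), Fintype.card_fin]
    calc μ (Γ ∩ A) ≤ μ ((Γ ∩ A) \ ⋃ x ∈ t, closedBall x (r x))
          + μ (⋃ x ∈ t, closedBall x (r x)) := by
          refine (measure_mono ?_).trans (measure_union_le _ _)
          intro w hw
          by_cases hwu : w ∈ ⋃ x ∈ t, closedBall x (r x)
          · exact Or.inr hwu
          · exact Or.inl ⟨hw, hwu⟩
      _ ≤ 0 + ∑' (x : t), μ (closedBall ↑x (r ↑x)) :=
          add_le_add hcov.le (measure_biUnion_le μ tcount _)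
      _ ≤ ∑' x : t, c * ENNReal.ofReal ((r ↑x)^m) := by
          rw [zero_add]
          exact ENNReal.tsum_le_tsum (fun x => hrb ↑x x.2)
      _ = c * ∑' x : t, ENNReal.ofReal ((r ↑x)^m) := ENNReal.tsum_mul_left
      _ ≤ c * C := mul_le_mul_right hsum _
  -- conclude μ (Γ ∩ A) = 0
  have hΓfin : μ (Γ ∩ A) ≠ ⊤ := by
    have hcomp : IsCompact Γ := isCompact_Icc.image_of_continuousOn hf.continuousOn
    exact ne_top_of_le_ne_top hcomp.measure_lt_top.ne (measure_mono inter_subset_left)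
  by_contra hne
  set c : ℝ≥0∞ := μ (Γ ∩ A) / (2 * C) with hc
  have hcpos : 0 < c :=
    ENNReal.div_pos hne (ENNReal.mul_ne_top (by norm_num) hCne)
  have h2 := main c hcpos
  have h3 : c * C ≤ μ (Γ ∩ A) / 2 := by
    rw [hc, div_eq_mul_inv, ENNReal.mul_inv (Or.inl (by norm_num)) (Or.inl (by norm_num)),
      mul_assoc, mul_assoc, ENNReal.inv_mul_cancel hC0 hCne, mul_one, ← div_eq_mul_inv]
  exact absurd (h2.trans h3) (not_le.2 (ENNReal.half_lt_self hne hΓfin))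

/-- The restriction of a Radon measure to the set where the lower `m`-dimensional density
vanishes is purely `m`-unrectifiable; consequently an `m`-rectifiable measure has positive
lower density almost everywhere. -/
theorem statement11 {n m : ℕ} (hm : 1 ≤ m) (hmn : m + 1 ≤ n)
    (μ : Measure (EuclideanSpace ℝ (Fin n))) [IsLocallyFiniteMeasure μ] :
    PurelyMUnrectifiable m (μ.restrict
      {x | liminf (fun r : ℝ => μ (closedBall x r) / ENNReal.ofReal (r ^ m)) (𝓝[>] 0) = 0}) ∧
    (MRectifiable m μ → ∀ᵐ x ∂μ,
      0 < liminf (fun r : ℝ => μ (closedBall x r) / ENNReal.ofReal (r ^ m)) (𝓝[>] 0)) := by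
  constructor
  · intro K f hf
    have hmeas : MeasurableSet (f '' Icc 0 1) :=
      (isCompact_Icc.image_of_continuousOn hf.continuousOn).isClosed.measurableSet
    rw [Measure.restrict_apply hmeas]
    exact key μ K f hf
  · rintro ⟨K, F, hlip, hnull⟩
    rw [ae_iff]
    have hset : {x : EuclideanSpace ℝ (Fin n) | ¬ 0 <
        liminf (fun r : ℝ => μ (closedBall x r) / ENNReal.ofReal (r ^ m)) (𝓝[>] 0)}
        = {x | liminf (fun r : ℝ => μ (closedBall x r) / ENNReal.ofReal (r ^ m)) (𝓝[>] 0) = 0} := by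
      ext x
      simp [pos_iff_ne_zero]
    rw [hset]
    set A : Set (EuclideanSpace ℝ (Fin n)) :=
      {x | liminf (fun r : ℝ => μ (closedBall x r) / ENNReal.ofReal (r ^ m)) (𝓝[>] 0) = 0} with hA
    have hsub : A ⊆ (⋃ i, (F i '' Icc 0 1) ∩ A) ∪ (univ \ ⋃ i, F i '' Icc 0 1) := by
      intro x hx
      by_cases hxu : x ∈ ⋃ i, F i '' Icc 0 1
      · obtain ⟨i, hi⟩ := mem_iUnion.1 hxu
        exact Or.inl (mem_iUnion.2 ⟨i, hi, hx⟩)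
      · exact Or.inr ⟨mem_univ x, hxu⟩
    refine measure_mono_null hsub (measure_union_null ?_ hnull)
    exact measure_iUnion_null fun i => key μ (K i) (F i) (hlip i)
end
end

section
/- (Martín–Mattila) Let 1 ≤ m ≤ n−1 be integers and let s ∈ [m, n). Let f_1, …, f_k : ℝ^n → ℝ^n be contracting similarities, i.e., there are ratios r_i ∈ (0,1) with |f_i(x) − f_i(y)| = r_i |x − y| for all x, y, satisfying Σ_{i=1}^k r_i^s = 1. Let S ⊂ ℝ^n be the nonempty compact set with S = ⋃_{i=1}^k f_i(S), and assume f_i(S) ∩ f_j(S) = ∅ for all i ≠ j. Then H^s restricted to S is singular to (m/s)-Hölder m-cubes: H^s(S ∩ Γ) = 0 for every (m/s)-Hölder m-cube Γ ⊂ ℝ^n. -/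
open MeasureTheory Metric Set Filter
open scoped ENNReal NNReal Topology

noncomputable section

set_option maxHeartbeats 4000000

/-- An `(m/s)`-Hölder `m`-cube in `ℝⁿ`: the image of a map `f : [0,1]^m → ℝⁿ` satisfying
`|f(x) − f(y)| ≤ H |x − y|^{m/s}` for some constant `H < ∞`. -/
def IsHolderCube {n : ℕ} (m : ℕ) (s : ℝ) (Γ : Set (EuclideanSpace ℝ (Fin n))) : Prop :=
  ∃ (H : ℝ) (f : (Fin m → ℝ) → EuclideanSpace ℝ (Fin n)),
    (∀ x ∈ Icc (0 : Fin m → ℝ) 1, ∀ y ∈ Icc (0 : Fin m → ℝ) 1,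
      dist (f x) (f y) ≤ H * dist x y ^ ((m : ℝ) / s)) ∧
    Γ = f '' Icc 0 1

/-- A `(1/s)`-Hölder curve in `ℝⁿ`: the image of a map `f : [0,1] → ℝⁿ` satisfying
`|f(x) − f(y)| ≤ H |x − y|^{1/s}` for some constant `H < ∞`. -/
def IsHolderCurve {n : ℕ} (s : ℝ) (Γ : Set (EuclideanSpace ℝ (Fin n))) : Prop :=
  ∃ (H : ℝ) (f : ℝ → EuclideanSpace ℝ (Fin n)),
    (∀ x ∈ Icc (0 : ℝ) 1, ∀ y ∈ Icc (0 : ℝ) 1,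
      dist (f x) (f y) ≤ H * |x - y| ^ (1 / s)) ∧
    Γ = f '' Icc 0 1

/-- **Martín–Mattila.** If `S` is a self-similar set of dimension `s ∈ [m, n)` whose defining
pieces `f_i(S)` are pairwise disjoint, then `H^s` restricted to `S` is singular to
`(m/s)`-Hölder `m`-cubes. -/
theorem statement13 {n m : ℕ} (hm : 1 ≤ m) (hmn : m + 1 ≤ n)
    (s : ℝ) (hs : (m : ℝ) ≤ s) (hsn : s < n)
    (k : ℕ) (f : Fin k → EuclideanSpace ℝ (Fin n) → EuclideanSpace ℝ (Fin n))
    (r : Fin k → ℝ) (hr : ∀ i, r i ∈ Ioo (0 : ℝ) 1)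
    (hsim : ∀ i x y, dist (f i x) (f i y) = r i * dist x y)
    (hsum : ∑ i, r i ^ s = 1)
    (S : Set (EuclideanSpace ℝ (Fin n))) (hSne : S.Nonempty) (hScpt : IsCompact S)
    (hself : S = ⋃ i, f i '' S)
    (hdisj : ∀ i j, i ≠ j → Disjoint (f i '' S) (f j '' S)) :
    ∀ Γ : Set (EuclideanSpace ℝ (Fin n)), IsHolderCube m s Γ → μH[s] (S ∩ Γ) = 0 := by
  classical
  intro Γ hΓ
  obtain ⟨H₀, g, hg, rfl⟩ := hΓ
  -- basic positivity facts
  have hm0 : (0:ℝ) < m := by exact_mod_cast hm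
  have hs0 : (0:ℝ) < s := lt_of_lt_of_le hm0 hs
  have hms : (0:ℝ) < (m:ℝ)/s := div_pos hm0 hs0
  have hsm : (0:ℝ) < s/(m:ℝ) := div_pos hs0 hm0
  haveI : Nonempty (Fin m) := ⟨⟨0, hm⟩⟩
  -- k is positive
  have hk : 0 < k := by
    rcases Nat.eq_zero_or_pos k with hk0 | hk0
    · exfalso
      subst hk0
      rw [iUnion_of_empty] at hself
      exact hSne.ne_empty hself
    · exact hk0
  haveI : Nonempty (Fin k) := ⟨⟨0, hk⟩⟩
  -- replace the Hölder constant with a positive one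
  set H₁ : ℝ := max H₀ 1 with hH₁def
  have hH₁pos : 0 < H₁ := lt_of_lt_of_le one_pos (le_max_right _ _)
  have hg' : ∀ x ∈ Icc (0 : Fin m → ℝ) 1, ∀ y ∈ Icc (0 : Fin m → ℝ) 1,
      dist (g x) (g y) ≤ H₁ * dist x y ^ ((m : ℝ) / s) := by
    intro x hx y hy
    refine (hg x hx y hy).trans ?_
    exact mul_le_mul_of_nonneg_right (le_max_left _ _)
      (Real.rpow_nonneg dist_nonneg _)
  -- continuity of the similarities
  have hflip : ∀ i, LipschitzWith (r i).toNNReal (f i) := by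
    intro i
    refine LipschitzWith.of_dist_le_mul fun x y => ?_
    rw [hsim i x y, Real.coe_toNNReal _ (hr i).1.le]
  -- pieces are compact
  have hpc : ∀ i, IsCompact (f i '' S) := fun i => hScpt.image (hflip i).continuous
  -- a uniform gap between distinct pieces
  obtain ⟨d, hd0, hdsep⟩ : ∃ d, 0 < d ∧ ∀ i j, i ≠ j →
      ∀ u ∈ f i '' S, ∀ v ∈ f j '' S, d ≤ dist u v := by
    have hpair : ∀ p : Fin k × Fin k, ∃ δ, 0 < δ ∧ (p.1 ≠ p.2 →
        ∀ u ∈ f p.1 '' S, ∀ v ∈ f p.2 '' S, δ ≤ dist u v) := by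
      rintro ⟨i, j⟩
      by_cases hij : i = j
      · exact ⟨1, one_pos, fun h => absurd hij h⟩
      · obtain ⟨δ, hδ, hdisj'⟩ := (hdisj i j hij).exists_thickenings (hpc i) (hpc j).isClosed
        refine ⟨δ, hδ, fun _ u hu v hv => ?_⟩
        by_contra hlt
        push_neg at hlt
        have hvi : v ∈ thickening δ (f i '' S) :=
          mem_thickening_iff.2 ⟨u, hu, by rwa [dist_comm] at hlt⟩
        have hvj : v ∈ thickening δ (f j '' S) := self_subset_thickening hδ _ hv
        exact (hdisj'.le_bot ⟨hvi, hvj⟩ : _)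
    choose δf hδpos hδsep using hpair
    refine ⟨(Finset.univ : Finset (Fin k × Fin k)).inf' Finset.univ_nonempty δf, ?_, ?_⟩
    · rw [Finset.lt_inf'_iff]
      exact fun p _ => hδpos p
    · intro i j hij u hu v hv
      exact le_trans (Finset.inf'_le _ (Finset.mem_univ (i, j))) (hδsep (i, j) hij u hu v hv)
  -- words and cylinder maps
  set Fw : List (Fin k) → EuclideanSpace ℝ (Fin n) → EuclideanSpace ℝ (Fin n) := fun l x => l.foldl (fun y a => f a y) x with hFwdef
  set rp : List (Fin k) → ℝ := fun l => (l.map r).prod with hrpdef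
  have hFw_nil : ∀ x, Fw [] x = x := fun _ => rfl
  have hFw_cons : ∀ a l x, Fw (a :: l) x = Fw l (f a x) := fun _ _ _ => rfl
  have hrp_nil : rp [] = 1 := rfl
  have hrp_cons : ∀ a l, rp (a :: l) = r a * rp l := by
    intro a l; simp [hrpdef]
  have hrp_pos : ∀ l, 0 < rp l := by
    intro l
    induction l with
    | nil => simp [hrp_nil]
    | cons a l ih => rw [hrp_cons]; exact mul_pos (hr a).1 ih
  have hrp_le_one : ∀ l, rp l ≤ 1 := by
    intro l
    induction l with
    | nil => simp [hrp_nil]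
    | cons a l ih =>
      rw [hrp_cons]
      calc r a * rp l ≤ 1 * 1 := by
            apply mul_le_mul (hr a).2.le ih (hrp_pos l).le zero_le_one
        _ = 1 := by ring
  have hFw_dist : ∀ l x y, dist (Fw l x) (Fw l y) = rp l * dist x y := by
    intro l
    induction l with
    | nil => intro x y; simp [hFw_nil, hrp_nil]
    | cons a l ih =>
      intro x y
      rw [hFw_cons, hFw_cons, ih, hsim, hrp_cons]
      ring
  have hfi_sub : ∀ i : Fin k, f i '' S ⊆ S := by
    intro i
    have h := subset_iUnion (fun i => f i '' S) i
    rwa [← hself] at h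
  have hFw_image : ∀ a l, Fw (a :: l) '' S = Fw l '' (f a '' S) := by
    intro a l
    rw [← Set.image_comp]
    rfl
  have hFw_sub : ∀ l, Fw l '' S ⊆ S := by
    intro l
    induction l with
    | nil => simp [hFwdef]
    | cons a l ih =>
      rw [hFw_image]
      exact (image_mono (hfi_sub a)).trans ih
  -- covering of S by generation-p cylinders
  have hcover : ∀ p : ℕ, S ⊆ ⋃ w : Fin p → Fin k, Fw (List.ofFn w) '' S := by
    intro p
    induction p with
    | zero =>
      intro x hx
      exact mem_iUnion.2 ⟨fun i => i.elim0, by simpa [hFwdef] using hx⟩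
    | succ p ih =>
      intro x hx
      obtain ⟨w, y, hy, hxy⟩ : ∃ w : Fin p → Fin k, ∃ y ∈ S, Fw (List.ofFn w) y = x := by
        rcases mem_iUnion.1 (ih hx) with ⟨w, y, hy, hxy⟩
        exact ⟨w, y, hy, hxy⟩
      have : y ∈ ⋃ i, f i '' S := hself ▸ hy
      rcases mem_iUnion.1 this with ⟨i, z, hz, hzy⟩
      refine mem_iUnion.2 ⟨Fin.cons i w, z, hz, ?_⟩
      have hofFn : List.ofFn (Fin.cons i w : Fin (p+1) → Fin k) = i :: List.ofFn w := by
        simp [List.ofFn_succ]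
      rw [hofFn, hFw_cons, hzy, hxy]
  -- preimages, scales and thickenings
  set T : List (Fin k) → Set (Fin m → ℝ) :=
    fun l => Icc (0 : Fin m → ℝ) 1 ∩ g ⁻¹' (Fw l '' S) with hTdef
  set τ : List (Fin k) → ℝ := fun l => (d/H₁) ^ (s/(m:ℝ)) * rp l ^ (s/(m:ℝ)) with hτdef
  have hτpos : ∀ l, 0 < τ l := fun l =>
    mul_pos (Real.rpow_pos_of_pos (div_pos hd0 hH₁pos) _)
      (Real.rpow_pos_of_pos (hrp_pos l) _)
  set V : List (Fin k) → Set (Fin m → ℝ) := fun l => thickening (τ l / 2) (T l) with hVdef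
  have hT_Icc : ∀ l, T l ⊆ Icc (0 : Fin m → ℝ) 1 := fun l => inter_subset_left
  have hT_cons : ∀ a l, T (a :: l) ⊆ T l := by
    intro a l
    apply inter_subset_inter_right
    apply preimage_mono
    rw [hFw_image]
    exact image_mono (hfi_sub a)
  -- Claim A : separation of sibling preimages
  have hsepT : ∀ (l : List (Fin k)) (i j : Fin k), i ≠ j →
      ∀ x ∈ T (i :: l), ∀ y ∈ T (j :: l), τ l ≤ dist x y := by
    intro l i j hij x hx y hy
    obtain ⟨hxI, hxS⟩ := hx
    obtain ⟨hyI, hyS⟩ := hy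
    rw [mem_preimage, hFw_image] at hxS hyS
    obtain ⟨u, hu, hux⟩ := hxS
    obtain ⟨v, hv, hvy⟩ := hyS
    have hdistg : rp l * d ≤ dist (g x) (g y) := by
      rw [← hux, ← hvy, hFw_dist]
      exact mul_le_mul_of_nonneg_left (hdsep i j hij u hu v hv) (hrp_pos l).le
    have hchain : rp l * d / H₁ ≤ dist x y ^ ((m:ℝ)/s) := by
      rw [div_le_iff₀ hH₁pos]
      calc rp l * d ≤ dist (g x) (g y) := hdistg
        _ ≤ H₁ * dist x y ^ ((m:ℝ)/s) := hg' x hxI y hyI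
        _ = dist x y ^ ((m:ℝ)/s) * H₁ := by ring
    have hnn : 0 ≤ rp l * d / H₁ :=
      div_nonneg (mul_nonneg (hrp_pos l).le hd0.le) hH₁pos.le
    have h2 := Real.rpow_le_rpow hnn hchain hsm.le
    have heq : (dist x y ^ ((m:ℝ)/s)) ^ (s/(m:ℝ)) = dist x y := by
      rw [← Real.rpow_mul dist_nonneg]
      rw [show ((m:ℝ)/s) * (s/(m:ℝ)) = 1 by field_simp]
      exact Real.rpow_one _
    rw [heq] at h2
    refine le_trans (le_of_eq ?_) h2
    simp only [hτdef]
    rw [← Real.mul_rpow (div_nonneg hd0.le hH₁pos.le) (hrp_pos l).le]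
    congr 1
    field_simp
  -- scale of children
  have hτ_cons : ∀ a l, τ (a :: l) = r a ^ (s/(m:ℝ)) * τ l := by
    intro a l
    simp only [hτdef]
    rw [hrp_cons, Real.mul_rpow (hr a).1.le (hrp_pos l).le]
    ring
  -- the maximal contraction exponentiated
  set ρm : ℝ := Finset.univ.sup' Finset.univ_nonempty (fun i => r i ^ (s/(m:ℝ))) with hρmdef
  have hρm_ge : ∀ i, r i ^ (s/(m:ℝ)) ≤ ρm := by
    intro i
    rw [hρmdef]
    exact Finset.le_sup' (fun j => r j ^ (s/(m:ℝ))) (Finset.mem_univ i)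
  have hρm_lt1 : ρm < 1 := by
    rw [hρmdef, Finset.sup'_lt_iff]
    exact fun i _ => Real.rpow_lt_one (hr i).1.le (hr i).2 hsm
  have hρm_pos : 0 < ρm :=
    lt_of_lt_of_le (Real.rpow_pos_of_pos (hr ⟨0, hk⟩).1 _) (hρm_ge ⟨0, hk⟩)
  have hτ_child_le : ∀ a l, τ (a :: l) ≤ ρm * τ l := by
    intro a l
    rw [hτ_cons]
    exact mul_le_mul_of_nonneg_right (hρm_ge a) (hτpos l).le
  -- Claim B : sibling thickenings are disjoint
  have hVdisj_sib : ∀ (l : List (Fin k)) (i j : Fin k), i ≠ j →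
      Disjoint (V (i :: l)) (V (j :: l)) := by
    intro l i j hij
    rw [Set.disjoint_left]
    intro x hxi hxj
    obtain ⟨p, hp, hdp⟩ := mem_thickening_iff.1 hxi
    obtain ⟨q, hq, hdq⟩ := mem_thickening_iff.1 hxj
    have h1 : dist p q ≤ dist x p + dist x q := dist_triangle_left p q x
    have h2 : τ (i :: l) ≤ ρm * τ l := hτ_child_le i l
    have h3 : τ (j :: l) ≤ ρm * τ l := hτ_child_le j l
    have h4 : τ l ≤ dist p q := hsepT l i j hij p hp q hq
    have h5 : ρm * τ l < τ l := by
      nlinarith [hτpos l]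
    linarith
  -- Claim C : nesting
  have hV_cons : ∀ a l, V (a :: l) ⊆ V l := by
    intro a l
    refine (thickening_subset_of_subset _ (hT_cons a l)).trans (thickening_mono ?_ _)
    have := hτ_child_le a l
    have h5 : ρm * τ l < τ l := by nlinarith [hτpos l]
    linarith
  -- the gain ball
  have hgain : ∀ l : List (Fin k), (T l).Nonempty →
      ∃ z : Fin m → ℝ, Metric.ball z (τ l * (1-ρm)/8) ⊆ V l ∧
        ∀ i : Fin k, Disjoint (Metric.ball z (τ l * (1-ρm)/8)) (V (i :: l)) := by
    intro l hne
    obtain ⟨y, hy⟩ := hne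
    set θ : ℝ := τ l * (1+ρm)/4 with hθdef
    set ρ : ℝ := τ l * (1-ρm)/8 with hρdef
    have hθpos : 0 < θ := by
      rw [hθdef]; nlinarith [hτpos l]
    have hρpos : 0 < ρ := by
      rw [hρdef]; nlinarith [hτpos l]
    set φ : ℝ → ℝ := fun t => infDist (y + t • (1 : Fin m → ℝ)) (T l) with hφdef
    have hφcont : Continuous φ := by
      apply (continuous_infDist_pt (T l)).comp
      exact continuous_const.add (continuous_id.smul continuous_const)
    have hφ0 : φ 0 = 0 := by
      simp only [hφdef, zero_smul, add_zero]
      exact infDist_zero_of_mem hy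
    have hnorm1 : ‖(1 : Fin m → ℝ)‖ = 1 := by
      have h1 : (1 : Fin m → ℝ) = fun _ => (1:ℝ) := rfl
      rw [h1, pi_norm_const (1:ℝ), norm_one]
    have hdistIcc : ∀ q ∈ T l, dist y q ≤ 1 := by
      intro q hq
      refine dist_pi_le_iff zero_le_one |>.2 fun i => ?_
      exact Real.dist_le_of_mem_Icc_01 ⟨(hT_Icc l hy).1 i, (hT_Icc l hy).2 i⟩
        ⟨(hT_Icc l hq).1 i, (hT_Icc l hq).2 i⟩
    have hφfar : θ ≤ φ (θ + 1) := by
      by_contra hlt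
      push_neg at hlt
      rw [hφdef] at hlt
      obtain ⟨q, hq, hdq⟩ := (infDist_lt_iff ⟨y, hy⟩).1 hlt
      have hd1 : dist (y + (θ+1) • (1 : Fin m → ℝ)) y = θ + 1 := by
        rw [dist_eq_norm]
        have : y + (θ+1) • (1 : Fin m → ℝ) - y = (θ+1) • (1 : Fin m → ℝ) := by
          abel
        rw [this, norm_smul, hnorm1, Real.norm_eq_abs, abs_of_pos (by linarith), mul_one]
      have htr : dist (y + (θ+1) • (1 : Fin m → ℝ)) y
          ≤ dist (y + (θ+1) • (1 : Fin m → ℝ)) q + dist q y := dist_triangle _ _ _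
      have hq1 : dist q y ≤ 1 := by rw [dist_comm]; exact hdistIcc q hq
      linarith [htr, hd1, hdq, hq1]
    have h0le : (0:ℝ) ≤ θ + 1 := by linarith
    have hIVT := intermediate_value_Icc h0le hφcont.continuousOn
    have hθmem : θ ∈ Icc (φ 0) (φ (θ+1)) := by
      rw [hφ0]
      exact ⟨hθpos.le, hφfar⟩
    obtain ⟨t₀, _, hφt₀⟩ := hIVT hθmem
    have hzθ : infDist (y + t₀ • (1 : Fin m → ℝ)) (T l) = θ := hφt₀
    refine ⟨y + t₀ • (1 : Fin m → ℝ), ?_, ?_⟩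
    · -- ball ⊆ V l
      intro x hx
      rw [mem_ball] at hx
      have hxd : infDist x (T l) < θ + ρ := by
        calc infDist x (T l) ≤ infDist (y + t₀ • (1 : Fin m → ℝ)) (T l)
              + dist x (y + t₀ • (1 : Fin m → ℝ)) := infDist_le_infDist_add_dist
          _ < θ + ρ := by rw [hzθ]; linarith
      have hlt : infDist x (T l) < τ l / 2 := by
        rw [hθdef, hρdef] at hxd
        nlinarith [hτpos l, hρm_lt1]
      obtain ⟨q, hq, hdq⟩ := (infDist_lt_iff ⟨y, hy⟩).1 hlt
      exact mem_thickening_iff.2 ⟨q, hq, hdq⟩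
    · -- ball disjoint from children
      intro i
      rw [Set.disjoint_left]
      intro x hx hxV
      rw [mem_ball] at hx
      obtain ⟨q, hq, hdq⟩ := mem_thickening_iff.1 hxV
      have hqT : q ∈ T l := hT_cons i l hq
      have hup : infDist x (T l) ≤ dist x q := infDist_le_dist_of_mem hqT
      have hlow : θ - ρ ≤ infDist x (T l) := by
        have : infDist (y + t₀ • (1 : Fin m → ℝ)) (T l) ≤ infDist x (T l)
            + dist (y + t₀ • (1 : Fin m → ℝ)) x := infDist_le_infDist_add_dist
        rw [hzθ] at this
        rw [dist_comm] at this
        linarith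
      have hτi : τ (i :: l) ≤ ρm * τ l := hτ_child_le i l
      rw [hθdef, hρdef] at hlow
      nlinarith [hτpos l, hρm_lt1, hρm_pos]
  -- the per-word volume gain
  set gval : List (Fin k) → ℝ≥0∞ := fun l =>
    if (T l).Nonempty then ENNReal.ofReal ((2 * (τ l * (1-ρm)/8))^m) else 0 with hgvaldef
  have hVopen : ∀ l, IsOpen (V l) := fun l => isOpen_thickening
  have hVmeas : ∀ l, MeasurableSet (V l) := fun l => (hVopen l).measurableSet
  -- main measure recursion
  have hmeas : ∀ l : List (Fin k),
      (∑ i : Fin k, volume (V (i :: l))) + gval l ≤ volume (V l) := by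
    intro l
    by_cases hne : (T l).Nonempty
    · obtain ⟨z, hball, hballdisj⟩ := hgain l hne
      set ρ : ℝ := τ l * (1-ρm)/8 with hρdef
      have hρpos : 0 < ρ := by rw [hρdef]; nlinarith [hτpos l, hρm_lt1]
      have hU : volume (⋃ i : Fin k, V (i :: l)) = ∑ i : Fin k, volume (V (i :: l)) := by
        rw [measure_iUnion ?_ (fun i => hVmeas _)]
        · rw [tsum_fintype]
        · intro i j hij
          exact hVdisj_sib l i j hij
      have hgv : gval l = volume (Metric.ball z ρ) := by
        rw [hgvaldef]
        simp only [hne, if_true]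
        rw [Real.volume_pi_ball z hρpos]
        congr 1
        simp [Fintype.card_fin, hρdef]
      have hdisjBU : Disjoint (⋃ i : Fin k, V (i :: l)) (Metric.ball z ρ) := by
        rw [Set.disjoint_iUnion_left]
        exact fun i => (hballdisj i).symm
      calc (∑ i : Fin k, volume (V (i :: l))) + gval l
          = volume (⋃ i : Fin k, V (i :: l)) + volume (Metric.ball z ρ) := by
            rw [hU, hgv]
        _ = volume ((⋃ i : Fin k, V (i :: l)) ∪ Metric.ball z ρ) :=
            (measure_union hdisjBU measurableSet_ball).symm
        _ ≤ volume (V l) := by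
            apply measure_mono
            apply Set.union_subset
            · exact iUnion_subset fun i => hV_cons i l
            · exact hball
    · have hTempty : T l = ∅ := not_nonempty_iff_eq_empty.1 hne
      have hchild : ∀ i : Fin k, V (i :: l) = ∅ := by
        intro i
        have : T (i :: l) = ∅ := eq_empty_of_subset_empty (hTempty ▸ hT_cons i l)
        simp only [hVdef]
        rw [this, thickening_empty]
      have : (∑ i : Fin k, volume (V (i :: l))) = 0 := by
        apply Finset.sum_eq_zero
        intro i _
        rw [hchild i, measure_empty]
      rw [this, hgvaldef]
      simp [hne]
  -- generation sums
  set A : ℕ → ℝ≥0∞ := fun p => ∑ w : Fin p → Fin k, volume (V (List.ofFn w)) with hAdef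
  set G : ℕ → ℝ≥0∞ := fun p => ∑ w : Fin p → Fin k, gval (List.ofFn w) with hGdef
  have hofFn_cons : ∀ (p : ℕ) (i : Fin k) (w : Fin p → Fin k),
      List.ofFn (Fin.cons i w : Fin (p+1) → Fin k) = i :: List.ofFn w := by
    intro p i w
    simp [List.ofFn_succ]
  have hstep : ∀ p : ℕ, A (p+1) + G p ≤ A p := by
    intro p
    have hre : (∑ w : Fin (p+1) → Fin k, volume (V (List.ofFn w)))
        = ∑ q : Fin k × (Fin p → Fin k), volume (V (q.1 :: List.ofFn q.2)) :=
      (Fintype.sum_equiv (Fin.consEquiv (fun _ => Fin k)) _ _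
        (fun q => by
          rw [show (Fin.consEquiv (fun _ => Fin k)) q = Fin.cons q.1 q.2 from rfl,
            hofFn_cons])).symm
    simp only [hAdef, hGdef]
    rw [hre, Fintype.sum_prod_type, Finset.sum_comm, ← Finset.sum_add_distrib]
    exact Finset.sum_le_sum fun w _ => hmeas (List.ofFn w)
  -- the total volume is finite
  have hA0 : A 0 < ⊤ := by
    have hVsub : V [] ⊆ Metric.closedBall (0 : Fin m → ℝ) (τ []/2 + 1) := by
      intro x hx
      obtain ⟨q, hq, hdq⟩ := mem_thickening_iff.1 hx
      have hq0 : dist q (0 : Fin m → ℝ) ≤ 1 := by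
        refine dist_pi_le_iff zero_le_one |>.2 fun i => ?_
        exact Real.dist_le_of_mem_Icc_01 ⟨(hT_Icc [] hq).1 i, (hT_Icc [] hq).2 i⟩
          ⟨le_refl 0, zero_le_one⟩
      rw [mem_closedBall]
      calc dist x 0 ≤ dist x q + dist q 0 := dist_triangle _ _ _
        _ ≤ τ []/2 + 1 := add_le_add hdq.le hq0
    have hcb : volume (Metric.closedBall (0 : Fin m → ℝ) (τ []/2 + 1)) < ⊤ :=
      (isCompact_closedBall _ _).measure_lt_top
    have : volume (V []) < ⊤ := lt_of_le_of_lt (measure_mono hVsub) hcb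
    simp only [hAdef]
    have huniq : ∀ w : Fin 0 → Fin k, List.ofFn w = [] := fun w => by simp
    calc (∑ w : Fin 0 → Fin k, volume (V (List.ofFn w)))
        = ∑ _w : Fin 0 → Fin k, volume (V []) := by
          refine Finset.sum_congr rfl fun w _ => by rw [huniq w]
      _ = volume (V []) := by
          rw [Finset.sum_const, Finset.card_univ]
          simp
      _ < ⊤ := this
  -- partial sums of gains are bounded
  have hsum_le : ∀ P : ℕ, A P + ∑ p ∈ Finset.range P, G p ≤ A 0 := by
    intro P
    induction P with
    | zero => simp
    | succ P ih =>
      calc A (P+1) + ∑ p ∈ Finset.range (P+1), G p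
          = (A (P+1) + G P) + ∑ p ∈ Finset.range P, G p := by
            rw [Finset.sum_range_succ]; ring
        _ ≤ A P + ∑ p ∈ Finset.range P, G p := add_le_add_left (hstep P) _
        _ ≤ A 0 := ih
  have htsum : ∑' p, G p ≤ A 0 := by
    rw [ENNReal.tsum_eq_iSup_nat]
    exact iSup_le fun P => le_trans le_add_self (hsum_le P)
  have hGtend : Tendsto G atTop (𝓝 0) :=
    ENNReal.tendsto_atTop_zero_of_tsum_ne_top (lt_of_le_of_lt htsum hA0).ne
  -- rewrite the gain in terms of rp ^ s
  set β : ℝ := ((1-ρm)/4 * (d/H₁) ^ (s/(m:ℝ)))^m with hβdef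
  have hβpos : 0 < β := by
    apply pow_pos
    apply mul_pos (by linarith)
    exact Real.rpow_pos_of_pos (div_pos hd0 hH₁pos) _
  have hgval_eq : ∀ l, (T l).Nonempty →
      gval l = ENNReal.ofReal β * ENNReal.ofReal (rp l ^ s) := by
    intro l hne
    simp only [hgvaldef]
    rw [if_pos hne, ← ENNReal.ofReal_mul hβpos.le]
    congr 1
    have h1 : 2 * (τ l * (1-ρm)/8) = ((1-ρm)/4 * (d/H₁)^(s/(m:ℝ))) * rp l ^ (s/(m:ℝ)) := by
      simp only [hτdef]; ring
    rw [h1, mul_pow, hβdef]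
    congr 1
    rw [← Real.rpow_natCast (rp l ^ (s/(m:ℝ))) m, ← Real.rpow_mul (hrp_pos l).le]
    congr 1
    field_simp
  -- diameter bounds for cylinders
  have hDne : EMetric.diam S ≠ ⊤ := hScpt.isBounded.ediam_ne_top
  set Dr : ℝ := (EMetric.diam S).toReal with hDrdef
  have hDr0 : 0 ≤ Dr := ENNReal.toReal_nonneg
  set rmax : ℝ := Finset.univ.sup' Finset.univ_nonempty r with hrmaxdef
  have hrmax_ge : ∀ i, r i ≤ rmax := by
    intro i
    rw [hrmaxdef]
    exact Finset.le_sup' r (Finset.mem_univ i)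
  have hrmax_lt1 : rmax < 1 := by
    rw [hrmaxdef, Finset.sup'_lt_iff]
    exact fun i _ => (hr i).2
  have hrmax_pos : 0 < rmax := lt_of_lt_of_le (hr ⟨0, hk⟩).1 (hrmax_ge ⟨0, hk⟩)
  have hrp_le : ∀ l : List (Fin k), rp l ≤ rmax ^ l.length := by
    intro l
    induction l with
    | nil => simp [hrp_nil]
    | cons a l ih =>
      rw [hrp_cons, List.length_cons, pow_succ, mul_comm (rmax ^ l.length) rmax]
      exact mul_le_mul (hrmax_ge a) ih (hrp_pos l).le hrmax_pos.le
  have hFw_lip : ∀ l, LipschitzWith (rp l).toNNReal (Fw l) := fun l =>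
    LipschitzWith.of_dist_le_mul fun x y => by
      rw [hFw_dist, Real.coe_toNNReal _ (hrp_pos l).le]
  have hdiam_cyl : ∀ l, EMetric.diam (Fw l '' S)
      ≤ ENNReal.ofReal (rp l) * EMetric.diam S := by
    intro l
    have h := (hFw_lip l).ediam_image_le S
    rwa [show ((rp l).toNNReal : ℝ≥0∞) = ENNReal.ofReal (rp l) from rfl] at h
  -- the covering sets
  set Cv : ∀ p : ℕ, (Fin p → Fin k) → Set (EuclideanSpace ℝ (Fin n)) :=
    fun p w => if (T (List.ofFn w)).Nonempty then Fw (List.ofFn w) '' S else ∅ with hCvdef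
  have hCv_sub : ∀ p (w : Fin p → Fin k), Cv p w ⊆ Fw (List.ofFn w) '' S := by
    intro p w
    simp only [hCvdef]
    split
    · exact subset_rfl
    · exact empty_subset _
  have hcov : ∀ p : ℕ, S ∩ (g '' Icc 0 1) ⊆ ⋃ w : Fin p → Fin k, Cv p w := by
    intro p x hx
    obtain ⟨hxS, hxΓ⟩ := hx
    obtain ⟨w, hw⟩ := mem_iUnion.1 (hcover p hxS)
    obtain ⟨u, huI, hgu⟩ := hxΓ
    have huT : u ∈ T (List.ofFn w) := ⟨huI, by rw [mem_preimage, hgu]; exact hw⟩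
    refine mem_iUnion.2 ⟨w, ?_⟩
    simp only [hCvdef]
    rw [if_pos ⟨u, huT⟩]
    exact hw
  have hdiam_bound : ∀ p (w : Fin p → Fin k),
      EMetric.diam (Cv p w) ≤ ENNReal.ofReal (rmax ^ p * Dr) := by
    intro p w
    refine le_trans (EMetric.diam_mono (hCv_sub p w)) ?_
    refine le_trans (hdiam_cyl (List.ofFn w)) ?_
    rw [show EMetric.diam S = ENNReal.ofReal Dr from (ENNReal.ofReal_toReal hDne).symm,
      ← ENNReal.ofReal_mul (hrp_pos _).le]
    apply ENNReal.ofReal_le_ofReal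
    have := hrp_le (List.ofFn w)
    rw [List.length_ofFn] at this
    exact mul_le_mul_of_nonneg_right this hDr0
  have hRtend : Tendsto (fun p => ENNReal.ofReal (rmax ^ p * Dr)) atTop (𝓝 0) := by
    have h1 : Tendsto (fun p : ℕ => rmax ^ p * Dr) atTop (𝓝 0) := by
      have := (tendsto_pow_atTop_nhds_zero_of_lt_one hrmax_pos.le hrmax_lt1).mul_const Dr
      rwa [zero_mul] at this
    have h2 := (ENNReal.continuous_ofReal.tendsto 0).comp h1
    rwa [ENNReal.ofReal_zero] at h2
  -- the key upper bound on diameter sums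
  set K : ℝ≥0∞ := EMetric.diam S ^ s * (ENNReal.ofReal β)⁻¹ with hKdef
  have hKne : K ≠ ⊤ := by
    apply ENNReal.mul_ne_top
    · exact ENNReal.rpow_ne_top_of_nonneg hs0.le hDne
    · rw [ENNReal.inv_ne_top, Ne, ENNReal.ofReal_eq_zero]
      exact not_le.2 hβpos
  have hsum_le' : ∀ p : ℕ,
      (∑ w : Fin p → Fin k, EMetric.diam (Cv p w) ^ s) ≤ K * G p := by
    intro p
    simp only [hGdef]
    rw [Finset.mul_sum]
    refine Finset.sum_le_sum fun w _ => ?_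
    by_cases hne : (T (List.ofFn w)).Nonempty
    · have hCveq : Cv p w = Fw (List.ofFn w) '' S := by
        simp only [hCvdef]; rw [if_pos hne]
      rw [hCveq, hgval_eq _ hne]
      have h1 : EMetric.diam (Fw (List.ofFn w) '' S) ^ s
          ≤ (ENNReal.ofReal (rp (List.ofFn w)) * EMetric.diam S) ^ s :=
        ENNReal.rpow_le_rpow (hdiam_cyl _) hs0.le
      have h2 : (ENNReal.ofReal (rp (List.ofFn w)) * EMetric.diam S) ^ s
          = ENNReal.ofReal (rp (List.ofFn w) ^ s) * EMetric.diam S ^ s := by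
        rw [ENNReal.mul_rpow_of_nonneg _ _ hs0.le,
          ENNReal.ofReal_rpow_of_pos (hrp_pos _)]
      have hc : (ENNReal.ofReal β)⁻¹ * ENNReal.ofReal β = 1 :=
        ENNReal.inv_mul_cancel
          (by rw [Ne, ENNReal.ofReal_eq_zero]; exact not_le.2 hβpos) ENNReal.ofReal_ne_top
      have h3 : K * (ENNReal.ofReal β * ENNReal.ofReal (rp (List.ofFn w) ^ s))
          = ENNReal.ofReal (rp (List.ofFn w) ^ s) * EMetric.diam S ^ s := by
        rw [hKdef, mul_assoc, ← mul_assoc (ENNReal.ofReal β)⁻¹, hc, one_mul, mul_comm]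
      rw [h3, ← h2]
      exact h1
    · have hCveq : Cv p w = ∅ := by
        simp only [hCvdef]; rw [if_neg hne]
      rw [hCveq]
      simp [EMetric.diam, Metric.ediam_empty, ENNReal.zero_rpow_of_pos hs0]
  have htend0 : Tendsto (fun p => ∑ w : Fin p → Fin k, EMetric.diam (Cv p w) ^ s)
      atTop (𝓝 0) := by
    have hK : Tendsto (fun p => K * G p) atTop (𝓝 0) := by
      have := ENNReal.Tendsto.const_mul hGtend (Or.inr hKne)
      rwa [mul_zero] at this
    exact tendsto_of_tendsto_of_tendsto_of_le_of_le tendsto_const_nhds hK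
      (fun p => zero_le) hsum_le'
  -- conclusion via Hausdorff measure covering bound
  have hmain := Measure.hausdorffMeasure_le_liminf_sum s (S ∩ (g '' Icc 0 1))
    (fun p => ENNReal.ofReal (rmax ^ p * Dr)) hRtend (fun p w => Cv p w)
    (Eventually.of_forall fun p w => hdiam_bound p w)
    (Eventually.of_forall hcov)
  refine le_antisymm ?_ zero_le
  calc μH[s] (S ∩ (g '' Icc 0 1))
      ≤ liminf (fun p => ∑ w : Fin p → Fin k, EMetric.diam (Cv p w) ^ s) atTop := hmain
    _ = 0 := htend0.liminf_eq
end
end
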